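/- For multi-winner approval voting, EJR does not imply IPSC: there exists a 12-voter instance (voters 1–3 approve {a,x}, voters 4–6 approve {a,y}, voters 7–12 approve {u,v,w,x,y,z}, k = 6) where the committee {u,v,w,x,y,z} satisfies Extended Justified Representation but violates IPSC. -/
import Mathlib


open Finset
open scoped Classical

noncomputable section

/-- Each voter's weak preference relation `pref i` is a total preorder. -/
def TotalPreorder {V C : Type} (pref : V → C → C → Prop) : Prop :=
  (∀ i a b, pref i a b ∨ pref i b a) ∧
  (∀ i a b c, pref i a b → pref i b c → pref i a c)

/-- `nth i j` is voter `i`'s `(j+1)`-th most preferred candidate under a fixed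
tie-breaking: an enumeration of all candidates consistent with `pref i`. -/
def TieBreak {V C : Type} [Fintype C] (pref : V → C → C → Prop) (nth : V → ℕ → C) : Prop :=
  (∀ i c, ∃ j, j < Fintype.card C ∧ nth i j = c) ∧
  (∀ i j j', j ≤ j' → pref i (nth i j) (nth i j'))

/-- `N'` solidly supports `C'`: every voter in `N'` weakly prefers every member of `C'`
to every non-member. -/
def Solid {V C : Type} (pref : V → C → C → Prop) (N' : Finset V) (C' : Finset C) : Prop :=
  ∀ i ∈ N', ∀ c' ∈ C', ∀ c, c ∉ C' → pref i c' c

/-- `P(N',C') = {c : ∃ i ∈ N', c ≿_i c^{(i,|C'|)}}` where `c^{(i,j)} = nth i (j-1)`. -/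
def Pset {V C : Type} [Fintype C] (pref : V → C → C → Prop) (nth : V → ℕ → C)
    (N' : Finset V) (C' : Finset C) : Finset C :=
  Finset.univ.filter fun c => ∃ i ∈ N', pref i c (nth i (C'.card - 1))

/-- total cost of a set of candidates -/
def cost {C : Type} (w : C → ℝ) (S : Finset C) : ℝ := ∑ c ∈ S, w c

/-- Comparative PSC for PB with general (weak) preferences. -/
def CPSC {V C : Type} [Fintype V] [Fintype C] (pref : V → C → C → Prop) (nth : V → ℕ → C)
    (b : V → ℝ) (w : C → ℝ) (L : ℝ) (W : Finset C) : Prop :=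
  ¬ ∃ (N' : Finset V) (C' : Finset C), Solid pref N' C' ∧
      cost w (Pset pref nth N' C' ∩ W) < (∑ i ∈ N', b i) * L / (Fintype.card V : ℝ) ∧
      ∃ C'' ⊆ C', cost w (Pset pref nth N' C' ∩ W) < cost w C'' ∧
        cost w C'' ≤ (∑ i ∈ N', b i) * L / (Fintype.card V : ℝ)

/-- Inclusion PSC for PB with general (weak) preferences. -/
def IPSC {V C : Type} [Fintype V] [Fintype C] (pref : V → C → C → Prop) (nth : V → ℕ → C)
    (b : V → ℝ) (w : C → ℝ) (L : ℝ) (W : Finset C) : Prop :=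
  ¬ ∃ (N' : Finset V) (C' : Finset C), Solid pref N' C' ∧
      cost w (Pset pref nth N' C' ∩ W) < (∑ i ∈ N', b i) * L / (Fintype.card V : ℝ) ∧
      ∃ c ∈ C', c ∉ Pset pref nth N' C' ∩ W ∧
        cost w (insert c (Pset pref nth N' C' ∩ W)) ≤ (∑ i ∈ N', b i) * L / (Fintype.card V : ℝ)

/-- `W` is exhaustive w.r.t. budget limit `L`. -/
def Exhaustive {C : Type} (w : C → ℝ) (L : ℝ) (W : Finset C) : Prop :=
  cost w W ≤ L ∧ ∀ c, c ∉ W → L < cost w (insert c W)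

/-- `W` is a maximal cost outcome w.r.t. budget limit `L`. -/
def MaximalCost {C : Type} (w : C → ℝ) (L : ℝ) (W : Finset C) : Prop :=
  cost w W ≤ L ∧ ∀ C' : Finset C, cost w C' ≤ L → cost w C' ≤ cost w W

/-- dichotomous preferences with approval sets `A i` -/
def Dichotomous {V C : Type} (pref : V → C → C → Prop) (A : V → Finset C) : Prop :=
  ∀ i a c, pref i a c ↔ (a ∈ A i ∨ c ∉ A i)

/-- `⋃_{i ∈ N'} A i` -/
def unionA {V C : Type} [Fintype C] (A : V → Finset C) (N' : Finset V) : Finset C :=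
  Finset.univ.filter fun c => ∃ i ∈ N', c ∈ A i

/-- `⋂_{i ∈ N'} A i` -/
def interA {V C : Type} [Fintype C] (A : V → Finset C) (N' : Finset V) : Finset C :=
  Finset.univ.filter fun c => ∀ i ∈ N', c ∈ A i

/-- Proportional Justified Representation for multi-winner approval voting. -/
def PJR {V C : Type} [Fintype V] [Fintype C] (A : V → Finset C) (k : ℕ) (W : Finset C) : Prop :=
  ∀ ℓ : ℕ, 0 < ℓ → ℓ ≤ k →
    ¬ ∃ Ns : Finset V, (ℓ * Fintype.card V : ℝ) / k ≤ Ns.card ∧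
      ℓ ≤ (interA A Ns).card ∧ (unionA A Ns ∩ W).card < ℓ

/-- Extended Justified Representation for multi-winner approval voting. -/
def EJR {V C : Type} [Fintype V] [Fintype C] (A : V → Finset C) (k : ℕ) (W : Finset C) : Prop :=
  ∀ ℓ : ℕ, 0 < ℓ → ℓ ≤ k →
    ¬ ∃ Ns : Finset V, (ℓ * Fintype.card V : ℝ) / k ≤ Ns.card ∧
      ℓ ≤ (interA A Ns).card ∧ ∀ i ∈ Ns, (A i ∩ W).card < ℓ

/-- IPSC in its approval-ballot form. -/
def IPSCapp {V C : Type} [Fintype V] [Fintype C] (A : V → Finset C)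
    (b : V → ℝ) (w : C → ℝ) (L : ℝ) (W : Finset C) : Prop :=
  Exhaustive w L W ∧
  ¬ ∃ N' : Finset V,
      cost w (unionA A N' ∩ W) < (∑ i ∈ N', b i) * L / (Fintype.card V : ℝ) ∧
      ∃ c ∈ interA A N', c ∉ unionA A N' ∩ W ∧
        cost w (insert c (unionA A N' ∩ W)) ≤ (∑ i ∈ N', b i) * L / (Fintype.card V : ℝ)

/-- candidates a=0, u=1, v=2, w=3, x=4, y=5, z=6; voters 1-3 approve {a,x},
voters 4-6 approve {a,y}, voters 7-12 approve {u,v,w,x,y,z}. -/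
def A18 : Fin 12 → Finset (Fin 7) := fun i =>
  if (i : ℕ) < 3 then {0, 4} else if (i : ℕ) < 6 then {0, 5} else {1, 2, 3, 4, 5, 6}

theorem inter_congr_decidable' {α : Type} (h : DecidableEq α) [DecidableEq α] (s t : Finset α) :
    @Inter.inter _ (@Finset.instInter α h) s t = s ∩ t := by
  congr!

theorem insert_congr_decidable' {α : Type} (h : DecidableEq α) [DecidableEq α] (a : α)
    (s : Finset α) :
    @insert _ _ (@Finset.instInsert α h) a s = insert a s := by
  congr!

/-- with k = 6, the committee {u,v,w,x,y,z} satisfies EJR but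
violates IPSC. -/
theorem ejr_not_implies_ipsc :
    EJR A18 6 ({1, 2, 3, 4, 5, 6} : Finset (Fin 7)) ∧
    ¬ IPSCapp A18 (fun _ => (1 : ℝ)) (fun _ => (1 : ℝ)) 6
        ({1, 2, 3, 4, 5, 6} : Finset (Fin 7)) := by
  constructor
  · intro ℓ hpos hle
    rintro ⟨Ns, hcard, hinter, hsat⟩
    rw [interA, Finset.filter_congr_decidable] at hinter
    have hcard' : 2 * ℓ ≤ Ns.card := by
      have h12 : (Fintype.card (Fin 12) : ℝ) = 12 := by simp
      rw [h12] at hcard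
      have : ((2 * ℓ : ℕ) : ℝ) ≤ (Ns.card : ℝ) := by push_cast; linarith
      exact_mod_cast this
    rcases Nat.lt_or_ge ℓ 2 with h2 | h2
    · -- ℓ = 1
      obtain ⟨i, hi⟩ : Ns.Nonempty := Finset.card_pos.mp (by omega)
      have hlt := hsat i hi
      rw [inter_congr_decidable'] at hlt
      have hne : (A18 i ∩ ({1, 2, 3, 4, 5, 6} : Finset (Fin 7))).Nonempty := by
        unfold A18
        split_ifs <;> decide
      have := Finset.card_pos.mpr hne
      omega
    · -- ℓ ≥ 2
      have hsub : ∀ i ∈ Ns, (i : ℕ) < 6 := by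
        intro i hi
        by_contra h6
        push_neg at h6
        have hA : A18 i = ({1, 2, 3, 4, 5, 6} : Finset (Fin 7)) := by
          rw [A18]
          rw [if_neg (by omega), if_neg (by omega)]
        have hlt := hsat i hi
        rw [inter_congr_decidable', hA] at hlt
        have hcc : (({1, 2, 3, 4, 5, 6} : Finset (Fin 7)) ∩
            ({1, 2, 3, 4, 5, 6} : Finset (Fin 7))).card = 6 := by decide
        omega
      set T1 := Ns.filter (fun i : Fin 12 => (i : ℕ) < 3) with hT1def
      set T2 := Ns.filter (fun i : Fin 12 => ¬ (i : ℕ) < 3) with hT2def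
      have hsplit : T1.card + T2.card = Ns.card :=
        Finset.card_filter_add_card_filter_not _
      have hT1le : T1.card ≤ 3 := by
        have hss : T1 ⊆ Finset.univ.filter (fun i : Fin 12 => (i : ℕ) < 3) := by
          intro x hx
          simp only [hT1def, Finset.mem_filter] at hx ⊢
          exact ⟨Finset.mem_univ x, hx.2⟩
        have hc : (Finset.univ.filter (fun i : Fin 12 => (i : ℕ) < 3)).card = 3 := by decide
        calc T1.card ≤ _ := Finset.card_le_card hss
        _ = 3 := hc
      have hT2le : T2.card ≤ 3 := by
        have hss : T2 ⊆ Finset.univ.filter (fun i : Fin 12 => 3 ≤ (i : ℕ) ∧ (i : ℕ) < 6) := by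
          intro x hx
          simp only [hT2def, Finset.mem_filter] at hx ⊢
          exact ⟨Finset.mem_univ x, by omega, hsub x hx.1⟩
        have hc : (Finset.univ.filter
            (fun i : Fin 12 => 3 ≤ (i : ℕ) ∧ (i : ℕ) < 6)).card = 3 := by decide
        calc T2.card ≤ _ := Finset.card_le_card hss
        _ = 3 := hc
      obtain ⟨i, hi⟩ : T1.Nonempty := Finset.card_pos.mp (by omega)
      obtain ⟨j, hj⟩ : T2.Nonempty := Finset.card_pos.mp (by omega)
      simp only [hT1def, Finset.mem_filter] at hi
      simp only [hT2def, Finset.mem_filter] at hj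
      have hAi : A18 i = ({0, 4} : Finset (Fin 7)) := by
        rw [A18]; rw [if_pos hi.2]
      have hAj : A18 j = ({0, 5} : Finset (Fin 7)) := by
        rw [A18]
        rw [if_neg hj.2, if_pos (by have := hsub j hj.1; omega)]
      have hIsub : Finset.univ.filter (fun c : Fin 7 => ∀ i ∈ Ns, c ∈ A18 i) ⊆
          ({0} : Finset (Fin 7)) := by
        intro c hc
        simp only [Finset.mem_filter] at hc
        have hci := hc.2 i hi.1
        have hcj := hc.2 j hj.1
        rw [hAi] at hci
        rw [hAj] at hcj
        fin_cases c <;> simp_all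
      have := Finset.card_le_card hIsub
      simp only [Finset.card_singleton] at this
      omega
  · rintro ⟨-, h⟩
    apply h
    have hU : unionA A18 ({0,1,2,3,4,5} : Finset (Fin 12)) ∩ ({1,2,3,4,5,6} : Finset (Fin 7))
        = ({4, 5} : Finset (Fin 7)) := by
      rw [unionA, Finset.filter_congr_decidable]
      decide
    have hc2 : (({4, 5} : Finset (Fin 7))).card = 2 := by decide
    have hc6 : (({0,1,2,3,4,5} : Finset (Fin 12))).card = 6 := by decide
    refine ⟨({0, 1, 2, 3, 4, 5} : Finset (Fin 12)), ?_, 0, ?_, ?_, ?_⟩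
    · rw [inter_congr_decidable', hU]
      norm_num [cost, Finset.sum_const, Fintype.card_fin, hc2, hc6]
    · rw [interA, Finset.filter_congr_decidable]
      decide
    · rw [inter_congr_decidable', hU]
      decide
    · rw [inter_congr_decidable', hU, insert_congr_decidable']
      rw [show insert (0 : Fin 7) ({4, 5} : Finset (Fin 7)) = ({0, 4, 5} : Finset (Fin 7))
        from by decide]
      norm_num [cost, Finset.sum_const, Fintype.card_fin, hc6,
        show (({0, 4, 5} : Finset (Fin 7))).card = 3 from by decide]
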